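/- For all integers p ≥ q ≥ 2 and d ≥ 1, there exists N = N(p,q,d) such that: for any finite set P ⊂ ℝ^d and any finite family B of axis-parallel boxes in ℝ^d whose trace B|_P has the (p,q) property and does not contain the empty set, the piercing number τ(B|_P) is at most N. -/

import Mathlib

attribute [local instance] Classical.propDecidable

set_option maxHeartbeats 1000000

namespace PQB

variable {α : Type} {ι : Type}

def Meets {D : ℕ} (X : Finset α) (ρ : α → Fin D → ℝ) (v : ι → Fin D → ℝ) (i j : ι) : Prop :=
  ∃ x ∈ X, ρ x ≤ v i ∧ ρ x ≤ v j

def NoPDisj {D : ℕ} (p : ℕ) (X : Finset α) (ρ : α → Fin D → ℝ) (v : ι → Fin D → ℝ)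
    (F : Finset ι) : Prop :=
  ∀ A ⊆ F, A.card = p → ∃ i ∈ A, ∃ j ∈ A, i ≠ j ∧ Meets X ρ v i j

theorem prehom (κ : Type) [Fintype κ] [Nonempty κ] :
    ∀ (L : ℕ) (S : Finset ℕ) (c : ℕ → ℕ → κ), (Fintype.card κ + 1) ^ L ≤ S.card →
      ∃ (l : List ℕ) (f : ℕ → κ), l.length = L ∧ l.Pairwise (· < ·) ∧ (∀ x ∈ l, x ∈ S) ∧
        l.Pairwise (fun i j => c i j = f i) := by
  intro L
  induction L with
  | zero =>
    intro S c _
    exact ⟨[], fun _ => Classical.arbitrary κ, rfl, List.Pairwise.nil, by simp, List.Pairwise.nil⟩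
  | succ L ih =>
    intro S c hcard
    have hS : S.Nonempty := by
      rw [← Finset.card_pos]
      calc 0 < (Fintype.card κ + 1) ^ (L+1) := by positivity
        _ ≤ S.card := hcard
    set a := S.min' hS with ha
    have haS : a ∈ S := S.min'_mem hS
    -- pigeonhole on the colour from a
    have hmaps : ∀ x ∈ S.erase a, c a x ∈ (Finset.univ : Finset κ) := by
      intro x _; exact Finset.mem_univ _
    have hcard2 : (Finset.univ : Finset κ).card * (Fintype.card κ + 1) ^ L ≤ (S.erase a).card := by
      rw [Finset.card_erase_of_mem haS, Finset.card_univ]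
      have : (Fintype.card κ + 1) ^ (L + 1)
          = Fintype.card κ * (Fintype.card κ + 1) ^ L + (Fintype.card κ + 1) ^ L := by ring
      have h1 : 1 ≤ (Fintype.card κ + 1) ^ L := Nat.one_le_pow _ _ (by omega)
      omega
    obtain ⟨k₀, -, hk₀⟩ := Finset.exists_le_card_fiber_of_mul_le_card_of_maps_to hmaps
      Finset.univ_nonempty hcard2
    set Fib := (S.erase a).filter (fun x => c a x = k₀) with hFib
    obtain ⟨l, f, hlen, hsort, hmem, hpw⟩ := ih Fib c hk₀
    refine ⟨a :: l, fun x => if x = a then k₀ else f x, by simp [hlen], ?_, ?_, ?_⟩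
    · refine List.pairwise_cons.2 ⟨?_, hsort⟩
      intro b hb
      have hbF : b ∈ Fib := hmem b hb
      have : b ∈ S.erase a := (Finset.mem_filter.1 hbF).1
      have hbS : b ∈ S := Finset.mem_of_mem_erase this
      have hne : b ≠ a := Finset.ne_of_mem_erase this
      exact lt_of_le_of_ne (S.min'_le b hbS) (Ne.symm hne)
    · intro x hx
      rcases List.mem_cons.1 hx with h | h
      · exact h ▸ haS
      · exact Finset.mem_of_mem_erase (Finset.mem_filter.1 (hmem x h)).1
    · refine List.pairwise_cons.2 ⟨?_, ?_⟩
      · intro b hb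
        have hbF := hmem b hb
        simp only [if_pos rfl]
        exact (Finset.mem_filter.1 hbF).2
      · refine hpw.imp_of_mem ?_
        intro i j hi _ hij
        have hiF := hmem i hi
        have hne : i ≠ a := Finset.ne_of_mem_erase (Finset.mem_filter.1 hiF).1
        simpa [if_neg hne] using hij

-- helper: in a <-sorted list, pairwise relation holds for value-ordered pairs of members
theorem pair_of_sorted {R : ℕ → ℕ → Prop} :
    ∀ {l : List ℕ}, l.Pairwise R → l.Pairwise (· < ·) → ∀ {i j}, i ∈ l → j ∈ l → i < j → R i j := by
  intro l
  induction l with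
  | nil => intro _ _ i j hi; simp at hi
  | cons a t ih =>
    intro hpw hsort i j hi hj hij
    have hpw' := List.pairwise_cons.1 hpw
    have hsort' := List.pairwise_cons.1 hsort
    rcases List.mem_cons.1 hi with rfl | hi'
    · rcases List.mem_cons.1 hj with rfl | hj'
      · omega
      · exact hpw'.1 j hj'
    · rcases List.mem_cons.1 hj with rfl | hj'
      · exact absurd (hsort'.1 i hi') (by omega)
      · exact ih hpw'.2 hsort'.2 hi' hj' hij

theorem ramsey (κ : Type) [Fintype κ] [Nonempty κ] (m : ℕ) :
    ∃ N : ℕ, 1 ≤ N ∧ ∀ (S : Finset ℕ) (c : ℕ → ℕ → κ), N ≤ S.card →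
      ∃ T ⊆ S, T.card = m ∧ ∃ k₀ : κ, ∀ i ∈ T, ∀ j ∈ T, i < j → c i j = k₀ := by
  classical
  set L := Fintype.card κ * m + 1 with hL
  refine ⟨(Fintype.card κ + 1) ^ L, Nat.one_le_pow _ _ (by omega), ?_⟩
  intro S c hcard
  obtain ⟨l, f, hlen, hsort, hmem, hpw⟩ := prehom κ L S c hcard
  -- pigeonhole on f over the elements of l
  have hnodup : l.Nodup := hsort.nodup
  have htf : l.toFinset.card = L := by rw [List.toFinset_card_of_nodup hnodup, hlen]
  have hmaps : ∀ x ∈ l.toFinset, f x ∈ (Finset.univ : Finset κ) := fun x _ => Finset.mem_univ _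
  have hcard2 : (Finset.univ : Finset κ).card * m ≤ l.toFinset.card := by
    rw [Finset.card_univ, htf]; omega
  obtain ⟨k₀, -, hk₀⟩ := Finset.exists_le_card_fiber_of_mul_le_card_of_maps_to hmaps
    Finset.univ_nonempty hcard2
  obtain ⟨T, hTsub, hTcard⟩ := Finset.exists_subset_card_eq hk₀
  refine ⟨T, ?_, hTcard, k₀, ?_⟩
  · intro x hx
    have := hTsub hx
    exact hmem x (List.mem_toFinset.1 (Finset.mem_filter.1 this).1)
  · intro i hi j hj hij
    have hiT := Finset.mem_filter.1 (hTsub hi)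
    have hjT := Finset.mem_filter.1 (hTsub hj)
    have : c i j = f i :=
      pair_of_sorted hpw hsort (List.mem_toFinset.1 hiT.1) (List.mem_toFinset.1 hjT.1) hij
    rw [this, hiT.2]


theorem mono_common (p D : ℕ) (hp : 2 ≤ p) (hD : 1 ≤ D) :
    ∃ R : ℕ, 1 ≤ R ∧ ∀ (X : Finset α) (ρ : α → Fin D → ℝ) (F : Finset ι) (v : ι → Fin D → ℝ),
      NoPDisj p X ρ v F → F.card = R →
        ∃ G ⊆ F, G.card = D + 1 ∧ ∃ x ∈ X, ∀ i ∈ G, ρ x ≤ v i := by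
  classical
  obtain ⟨R, hR1, hRam⟩ := ramsey (Option (Fin D → Bool)) (max p (D + 1))
  refine ⟨R, hR1, ?_⟩
  intro X ρ F v hnop hcard
  have hFne : F.Nonempty := by rw [← Finset.card_pos, hcard]; omega
  obtain ⟨i₀, hi₀⟩ := hFne
  set l := F.toList with hl
  have hlen : l.length = R := by rw [hl, Finset.length_toList, hcard]
  have hnd : l.Nodup := F.nodup_toList
  set mem : ℕ → ι := fun t => l.getD t i₀ with hmem
  have hmemF : ∀ t, t < R → mem t ∈ F := by
    intro t ht
    have ht' : t < l.length := by omega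
    have : mem t = l[t] := List.getD_eq_getElem l i₀ ht'
    rw [this, ← Finset.mem_toList]
    exact List.getElem_mem _
  have hinj : ∀ s t, s < R → t < R → mem s = mem t → s = t := by
    intro s t hs ht h
    have hs' : s < l.length := by omega
    have ht' : t < l.length := by omega
    have h1 : mem s = l[s] := List.getD_eq_getElem l i₀ hs'
    have h2 : mem t = l[t] := List.getD_eq_getElem l i₀ ht'
    rw [h1, h2] at h
    exact (List.Nodup.getElem_inj_iff hnd).1 h
  set c : ℕ → ℕ → Option (Fin D → Bool) := fun s t =>
    if Meets X ρ v (mem s) (mem t) then some (fun cc => decide (v (mem s) cc ≤ v (mem t) cc))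
    else none with hc
  obtain ⟨T, hTsub, hTcard, k₀, hk₀⟩ := hRam (Finset.range R) c (by simp)
  have hTR : ∀ t ∈ T, t < R := fun t ht => Finset.mem_range.1 (hTsub ht)
  match k₀ with
  | none =>
    -- a monochromatic "disjoint" clique of size ≥ p : contradiction
    exfalso
    have hple : p ≤ T.card := by rw [hTcard]; exact le_max_left _ _
    obtain ⟨T', hT'sub, hT'card⟩ := Finset.exists_subset_card_eq hple
    have hA : T'.image mem ⊆ F := by
      intro x hx
      obtain ⟨t, ht, rfl⟩ := Finset.mem_image.1 hx
      exact hmemF t (hTR t (hT'sub ht))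
    have hAcard : (T'.image mem).card = p := by
      rw [Finset.card_image_of_injOn, hT'card]
      intro s hs t ht h
      exact hinj s t (hTR s (hT'sub hs)) (hTR t (hT'sub ht)) h
    obtain ⟨i, hi, j, hj, hij, hmeets⟩ := hnop _ hA hAcard
    obtain ⟨s, hs, rfl⟩ := Finset.mem_image.1 hi
    obtain ⟨t, ht, rfl⟩ := Finset.mem_image.1 hj
    have hst : s ≠ t := fun h => hij (by rw [h])
    -- wlog s < t
    rcases lt_or_gt_of_ne hst with h | h
    · have := hk₀ s (hT'sub hs) t (hT'sub ht) h
      rw [hc] at this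
      simp only [if_pos hmeets] at this
      cases this
    · have hmeets' : Meets X ρ v (mem t) (mem s) := by
        obtain ⟨x, hx, h1, h2⟩ := hmeets
        exact ⟨x, hx, h2, h1⟩
      have := hk₀ t (hT'sub ht) s (hT'sub hs) h
      rw [hc] at this
      simp only [if_pos hmeets'] at this
      cases this
  | some b =>
    have hDle : D + 1 ≤ T.card := by rw [hTcard]; exact le_max_right _ _
    obtain ⟨T', hT'sub, hT'card⟩ := Finset.exists_subset_card_eq hDle
    have hT'ne : T'.Nonempty := by rw [← Finset.card_pos, hT'card]; omega
    set s₀ := T'.min' hT'ne with hs₀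
    set t₀ := T'.max' hT'ne with ht₀
    have hlt : s₀ < t₀ := by
      apply Finset.min'_lt_max'_of_card
      omega
    -- basic decoding of colours
    have hdecode : ∀ s ∈ T', ∀ t ∈ T', s < t → Meets X ρ v (mem s) (mem t) ∧
        ∀ cc, (v (mem s) cc ≤ v (mem t) cc ↔ b cc = true) := by
      intro s hs t ht hst
      have := hk₀ s (hT'sub hs) t (hT'sub ht) hst
      rw [hc] at this
      by_cases hM : Meets X ρ v (mem s) (mem t)
      · simp only [if_pos hM] at this
        refine ⟨hM, ?_⟩
        intro cc
        have hb : (fun cc => decide (v (mem s) cc ≤ v (mem t) cc)) = b := by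
          exact Option.some_injective _ this
        constructor
        · intro hle
          rw [← congrFun hb cc]
          simpa using hle
        · intro hbt
          have := congrFun hb cc
          rw [hbt] at this
          exact of_decide_eq_true this
      · simp only [if_neg hM] at this
        cases this
    obtain ⟨hM0, -⟩ := hdecode s₀ (T'.min'_mem hT'ne) t₀ (T'.max'_mem hT'ne) hlt
    obtain ⟨x, hx, hx1, hx2⟩ := hM0
    refine ⟨T'.image mem, ?_, ?_, x, hx, ?_⟩
    · intro y hy
      obtain ⟨t, ht, rfl⟩ := Finset.mem_image.1 hy
      exact hmemF t (hTR t (hT'sub ht))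
    · rw [Finset.card_image_of_injOn, hT'card]
      intro s hs t ht h
      exact hinj s t (hTR s (hT'sub hs)) (hTR t (hT'sub ht)) h
    · intro i hi
      obtain ⟨t, ht, rfl⟩ := Finset.mem_image.1 hi
      intro cc
      by_cases hb : b cc = true
      · -- coordinate increasing: bound via s₀
        have h1 : ρ x cc ≤ v (mem s₀) cc := hx1 cc
        rcases eq_or_lt_of_le (T'.min'_le t ht) with h | h
        · rw [← h]; exact h1
        · have := (hdecode s₀ (T'.min'_mem hT'ne) t ht h).2 cc
          exact le_trans h1 (this.2 hb)
      · -- coordinate decreasing: bound via t₀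
        have h2 : ρ x cc ≤ v (mem t₀) cc := hx2 cc
        rcases eq_or_lt_of_le (T'.le_max' t ht) with h | h
        · rw [h]; exact h2
        · have := (hdecode t ht t₀ (T'.max'_mem hT'ne) h).2 cc
          have hge : v (mem t₀) cc ≤ v (mem t) cc := by
            by_contra hcon
            push_neg at hcon
            exact hb (this.1 (le_of_lt hcon))
          exact le_trans h2 hge

/-- trinomial revision identity -/
theorem choose_trinomial {n R E : ℕ} (hER : E ≤ R) (hRn : R ≤ n) :
    n.choose R * R.choose E = n.choose E * (n - E).choose (R - E) := by
  have hEn : E ≤ n := le_trans hER hRn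
  have hRE : R - E ≤ n - E := by omega
  have key : n.choose R * R.choose E * (E.factorial * (R - E).factorial * (n - R).factorial)
      = n.choose E * (n - E).choose (R - E) * (E.factorial * (R - E).factorial * (n - R).factorial) := by
    have h1 : n.choose R * R.choose E * (E.factorial * (R - E).factorial * (n - R).factorial)
        = n.choose R * (R.choose E * E.factorial * (R - E).factorial) * (n - R).factorial := by ring
    rw [h1, Nat.choose_mul_factorial_mul_factorial hER]
    have h2 : n.choose R * R.factorial * (n - R).factorial = n.factorial :=
      Nat.choose_mul_factorial_mul_factorial hRn
    have h3 : n.choose E * (n - E).choose (R - E) * (E.factorial * (R - E).factorial * (n - R).factorial)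
        = n.choose E * E.factorial * ((n - E).choose (R - E) * (R - E).factorial * ((n - E) - (R - E)).factorial) := by
      have : (n - E) - (R - E) = n - R := by omega
      rw [this]; ring
    rw [h2, h3, Nat.choose_mul_factorial_mul_factorial hRE]
    have h4 : (n - E) - (R - E) = n - R := by omega
    calc n.factorial = n.choose E * E.factorial * (n - E).factorial :=
          (Nat.choose_mul_factorial_mul_factorial hEn).symm
      _ = n.choose E * E.factorial * (n - E).factorial := rfl
  have hpos : 0 < E.factorial * (R - E).factorial * (n - R).factorial := by positivity
  exact Nat.eq_of_mul_eq_mul_right hpos key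

/-- extract a `D`-subset controlling the common points of a `(D+1)`-set -/
theorem achiever {D : ℕ} (ρ : α → Fin D → ℝ) (v : ι → Fin D → ℝ) (G : Finset ι)
    (hG : G.card = D + 1) :
    ∃ S' ⊆ G, S'.card = D ∧ (∃ y ∈ G, y ∉ S' ∧ G = insert y S') ∧
      ∀ x : α, (∀ i ∈ S', ρ x ≤ v i) → ∀ i ∈ G, ρ x ≤ v i := by
  classical
  have hGne : G.Nonempty := by rw [← Finset.card_pos, hG]; omega
  have hach : ∀ cc : Fin D, ∃ i ∈ G, ∀ j ∈ G, v i cc ≤ v j cc := by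
    intro cc
    exact Finset.exists_min_image G (fun i => v i cc) hGne
  choose a haG hamin using hach
  set A₀ := Finset.image a Finset.univ with hA₀
  have hA₀sub : A₀ ⊆ G := by
    intro i hi
    obtain ⟨cc, -, rfl⟩ := Finset.mem_image.1 hi
    exact haG cc
  have hA₀card : A₀.card ≤ D := le_trans (Finset.card_image_le) (by simp)
  obtain ⟨S', hsub1, hsub2, hScard⟩ := Finset.exists_subsuperset_card_eq (n := D) hA₀sub
    (by omega) (by omega)
  have hScard' : S'.card = D := by omega
  have hyd : (G \ S').card = 1 := by
    rw [Finset.card_sdiff_of_subset hsub2]; omega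
  obtain ⟨y, hy⟩ := Finset.card_eq_one.1 hyd
  have hyG : y ∈ G := by
    have : y ∈ G \ S' := hy ▸ Finset.mem_singleton_self y
    exact (Finset.mem_sdiff.1 this).1
  have hynS : y ∉ S' := by
    have : y ∈ G \ S' := hy ▸ Finset.mem_singleton_self y
    exact (Finset.mem_sdiff.1 this).2
  refine ⟨S', hsub2, hScard', ⟨y, hyG, hynS, ?_⟩, ?_⟩
  · apply Finset.eq_of_subset_of_card_le
    · intro i hi
      by_cases h : i ∈ S'
      · exact Finset.mem_insert_of_mem h
      · have : i ∈ G \ S' := Finset.mem_sdiff.2 ⟨hi, h⟩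
        rw [hy] at this
        exact Finset.mem_insert.2 (Or.inl (Finset.mem_singleton.1 this))
    · rw [Finset.card_insert_of_notMem hynS, hScard', hG]
  · intro x hx i hi cc
    calc ρ x cc ≤ v (a cc) cc := hx (a cc) (hsub1 (Finset.mem_image.2 ⟨cc, Finset.mem_univ _, rfl⟩)) cc
      _ ≤ v i cc := hamin cc i hi

theorem heavy_point (p D : ℕ) (hp : 2 ≤ p) (hD : 1 ≤ D) :
    ∃ R K₁ : ℕ, 1 ≤ R ∧ 1 ≤ K₁ ∧ D + 1 ≤ R ∧
      ∀ (X : Finset α) (ρ : α → Fin D → ℝ) (F : Finset ι) (v : ι → Fin D → ℝ),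
      (∀ i ∈ F, ∃ x ∈ X, ρ x ≤ v i) → NoPDisj p X ρ v F → R ≤ F.card →
        ∃ x ∈ X, F.card - D ≤ (F.filter (fun i => ρ x ≤ v i)).card * K₁ := by
  classical
  obtain ⟨R₀, hR₀1, hmono⟩ := mono_common (α := α) (ι := ι) p D hp hD
  set R := max R₀ (D + 1) with hRdef
  refine ⟨R, (D + 1) * R.choose (D + 1), le_trans hR₀1 (le_max_left _ _), ?_, le_max_right _ _, ?_⟩
  · have h1 : 0 < R.choose (D+1) := Nat.choose_pos (le_max_right _ _)
    have : 0 < (D + 1) * R.choose (D + 1) := Nat.mul_pos (by omega) h1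
    omega
  intro X ρ F v hne hnop hRcard
  set n := F.card with hn
  -- `good`: (D+1)-субsets with a common point
  set good := (F.powersetCard (D + 1)).filter (fun G => ∃ x ∈ X, ∀ i ∈ G, ρ x ≤ v i) with hgood
  -- Step A: every R-subset contains a good (D+1)-subset
  have stepA : ∀ A ∈ F.powersetCard R, ∃ G ∈ good, G ⊆ A := by
    intro A hA
    rw [Finset.mem_powersetCard] at hA
    -- shrink A to exactly R₀ elements
    obtain ⟨A', hA'sub, hA'card⟩ := Finset.exists_subset_card_eq
      (le_trans (le_max_left R₀ (D+1)) (le_of_eq hA.2.symm))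
    have hnop' : NoPDisj p X ρ v A' := by
      intro B hB hBcard
      exact hnop B (le_trans hB (le_trans hA'sub hA.1)) hBcard
    obtain ⟨G, hGsub, hGcard, hGx⟩ := hmono X ρ A' v hnop' hA'card
    refine ⟨G, ?_, le_trans hGsub hA'sub⟩
    rw [hgood, Finset.mem_filter, Finset.mem_powersetCard]
    exact ⟨⟨le_trans hGsub (le_trans hA'sub hA.1), hGcard⟩, hGx⟩
  -- Step B: good is large
  have hD1n : D + 1 ≤ n := le_trans (le_max_right _ _) hRcard
  choose g hg hgsub using stepA
  set φ : Finset ι → Finset ι := fun A => if h : A ∈ F.powersetCard R then g A h else ∅ with hφ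
  have hφmem : ∀ A ∈ F.powersetCard R, φ A ∈ good := by
    intro A hA; rw [hφ]; simp only [dif_pos hA]; exact hg A hA
  have hφsub : ∀ A ∈ F.powersetCard R, φ A ⊆ A := by
    intro A hA; rw [hφ]; simp only [dif_pos hA]; exact hgsub A hA
  have hgoodcard : ∀ G ∈ good, G.card = D + 1 ∧ G ⊆ F := by
    intro G hG
    rw [hgood, Finset.mem_filter, Finset.mem_powersetCard] at hG
    exact ⟨hG.1.2, hG.1.1⟩
  have stepB : n.choose R ≤ good.card * (n - (D+1)).choose (R - (D+1)) := by
    have hsum : (F.powersetCard R).card = ∑ G ∈ good, ((F.powersetCard R).filter (fun A => φ A = G)).card :=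
      Finset.card_eq_sum_card_fiberwise hφmem
    have hfib : ∀ G ∈ good, ((F.powersetCard R).filter (fun A => φ A = G)).card
        ≤ (n - (D+1)).choose (R - (D+1)) := by
      intro G hG
      have hGcard := (hgoodcard G hG).1
      have hrw : ((n:ℕ) - (D+1)).choose (R - (D+1)) = ((F \ G).powersetCard (R - (D+1))).card := by
        rw [Finset.card_powersetCard, Finset.card_sdiff_of_subset (hgoodcard G hG).2, hGcard, hn]
      rw [hrw]
      apply Finset.card_le_card_of_injOn (fun A => A \ G)
      · intro A hA
        simp only [Finset.mem_coe] at hA ⊢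
        rw [Finset.mem_filter] at hA
        obtain ⟨hA1, hA2⟩ := hA
        have hGA : G ⊆ A := by
          have := hφsub A hA1
          rwa [hA2] at this
        rw [Finset.mem_powersetCard] at hA1 ⊢
        constructor
        · exact Finset.sdiff_subset_sdiff hA1.1 (le_refl G)
        · rw [Finset.card_sdiff_of_subset hGA, hA1.2, hGcard]
      · intro A hA A' hA' hAA
        simp only [Finset.mem_coe, Finset.mem_filter] at hA hA'
        have hGA : G ⊆ A := by
          have := hφsub A hA.1; rwa [hA.2] at this
        have hGA' : G ⊆ A' := by
          have := hφsub A' hA'.1; rwa [hA'.2] at this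
        have hAA' : A \ G = A' \ G := hAA
        calc A = A \ G ∪ G := (Finset.sdiff_union_of_subset hGA).symm
          _ = A' \ G ∪ G := by rw [hAA']
          _ = A' := Finset.sdiff_union_of_subset hGA'
    calc n.choose R = (F.powersetCard R).card := by rw [Finset.card_powersetCard, hn]
      _ = ∑ G ∈ good, ((F.powersetCard R).filter (fun A => φ A = G)).card := hsum
      _ ≤ good.card • ((n - (D+1)).choose (R - (D+1))) := Finset.sum_le_card_nsmul _ _ _ hfib
      _ = good.card * (n - (D+1)).choose (R - (D+1)) := by rw [smul_eq_mul]
  -- Step C : good.card * R.choose (D+1) ≥ n.choose (D+1)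
  have hRn : R ≤ n := hRcard
  have hD1R : D + 1 ≤ R := le_max_right _ _
  have hXpos : 0 < (n - (D+1)).choose (R - (D+1)) := Nat.choose_pos (by omega)
  have stepC : n.choose (D+1) ≤ good.card * R.choose (D+1) := by
    have hid : n.choose R * R.choose (D+1) = n.choose (D+1) * (n - (D+1)).choose (R - (D+1)) :=
      choose_trinomial hD1R hRn
    have h1 : n.choose (D+1) * (n - (D+1)).choose (R - (D+1))
        ≤ good.card * R.choose (D+1) * (n - (D+1)).choose (R - (D+1)) := by
      rw [← hid]
      calc n.choose R * R.choose (D+1)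
          ≤ (good.card * (n - (D+1)).choose (R - (D+1))) * R.choose (D+1) :=
            Nat.mul_le_mul_right _ stepB
        _ = good.card * R.choose (D+1) * (n - (D+1)).choose (R - (D+1)) := by ring
    exact Nat.le_of_mul_le_mul_right h1 hXpos
  -- Step D: achiever data for each good set
  have hach : ∀ G ∈ good, ∃ S' ⊆ G, S'.card = D ∧ (∃ y ∈ G, y ∉ S' ∧ G = insert y S') ∧
      ∀ x : α, (∀ i ∈ S', ρ x ≤ v i) → ∀ i ∈ G, ρ x ≤ v i := by
    intro G hG
    exact achiever ρ v G (hgoodcard G hG).1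
  choose Sd hSdsub hSdcard hSdy hSdctl using hach
  choose yy hyyG hyynS hyins using hSdy
  set ψ : Finset ι → Finset ι := fun G => if h : G ∈ good then Sd G h else ∅ with hψ
  have hψmaps : ∀ G ∈ good, ψ G ∈ F.powersetCard D := by
    intro G hG
    rw [hψ]; simp only [dif_pos hG]
    rw [Finset.mem_powersetCard]
    exact ⟨le_trans (hSdsub G hG) (hgoodcard G hG).2, hSdcard G hG⟩
  have hDn : D ≤ n := by omega
  have htne : (F.powersetCard D).Nonempty := by
    rw [← Finset.card_pos, Finset.card_powersetCard]
    exact Nat.choose_pos hDn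
  obtain ⟨S₀, hS₀mem, hS₀max⟩ := Finset.exists_max_image (F.powersetCard D)
    (fun S₀ => (good.filter (fun G => ψ G = S₀)).card) htne
  -- good.card ≤ (n choose D) * fib.card
  set fib := good.filter (fun G => ψ G = S₀) with hfib
  have hgoodle : good.card ≤ (F.powersetCard D).card * fib.card := by
    calc good.card = ∑ S ∈ F.powersetCard D, (good.filter (fun G => ψ G = S)).card :=
          Finset.card_eq_sum_card_fiberwise hψmaps
      _ ≤ (F.powersetCard D).card • fib.card :=
          Finset.sum_le_card_nsmul _ _ _ (fun S hS => hS₀max S hS)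
      _ = (F.powersetCard D).card * fib.card := by rw [smul_eq_mul]
  have hgoodpos : 0 < good.card := by
    by_contra h
    push_neg at h
    have : good.card = 0 := by omega
    rw [this, Nat.zero_mul] at stepC
    have := Nat.choose_pos hD1n
    omega
  have hfibpos : 0 < fib.card := by
    by_contra h
    push_neg at h
    have : fib.card = 0 := by omega
    rw [this, Nat.mul_zero] at hgoodle
    omega
  obtain ⟨G₀, hG₀⟩ := Finset.card_pos.1 hfibpos
  have hG₀good : G₀ ∈ good := (Finset.mem_filter.1 hG₀).1
  have hG₀ψ : ψ G₀ = S₀ := (Finset.mem_filter.1 hG₀).2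
  -- common point of G₀
  have hG₀x : ∃ x ∈ X, ∀ i ∈ G₀, ρ x ≤ v i := by
    have := Finset.mem_filter.1 hG₀good
    exact this.2
  obtain ⟨x₀, hx₀X, hx₀⟩ := hG₀x
  -- x₀ dominates everything in S₀
  have hx₀S₀ : ∀ i ∈ S₀, ρ x₀ ≤ v i := by
    intro i hi
    apply hx₀
    apply hSdsub G₀ hG₀good
    have : ψ G₀ = Sd G₀ hG₀good := by rw [hψ]; simp only [dif_pos hG₀good]
    rw [← this, hG₀ψ]
    exact hi
  refine ⟨x₀, hx₀X, ?_⟩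
  set hit := F.filter (fun i => ρ x₀ ≤ v i) with hhit
  -- fib injects into hit via yy
  have hfibhit : fib.card ≤ hit.card := by
    have hyval : ∀ G (hG : G ∈ fib), yy G (Finset.mem_filter.1 hG).1 ∈ hit := by
      intro G hG
      have hGg : G ∈ good := (Finset.mem_filter.1 hG).1
      have hGψ : ψ G = S₀ := (Finset.mem_filter.1 hG).2
      have hSdG : Sd G hGg = S₀ := by
        have : ψ G = Sd G hGg := by rw [hψ]; simp only [dif_pos hGg]
        rw [← this, hGψ]
      rw [hhit, Finset.mem_filter]
      constructor
      · exact (hgoodcard G hGg).2 (hyyG G hGg)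
      · apply hSdctl G hGg x₀ _ _ (hyyG G hGg)
        rw [hSdG]
        exact hx₀S₀
    -- build injection
    set f : Finset ι → ι :=
      fun G => if h : G ∈ fib then yy G (Finset.mem_filter.1 h).1 else yy G₀ hG₀good with hf
    have hSdS₀ : ∀ (G) (hG : G ∈ fib), Sd G (Finset.mem_filter.1 hG).1 = S₀ := by
      intro G hG
      have hGψ : ψ G = S₀ := (Finset.mem_filter.1 hG).2
      exact (dif_pos (Finset.mem_filter.1 hG).1).symm.trans hGψ
    apply Finset.card_le_card_of_injOn f
    · intro G hG
      rw [hf]; simp only [Finset.mem_coe] at hG ⊢; simp only [dif_pos hG]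
      exact hyval G hG
    · intro G hG G' hG' hGG'
      simp only [Finset.mem_coe] at hG hG'
      rw [hf] at hGG'
      simp only [dif_pos hG, dif_pos hG'] at hGG'
      have e1 : G = insert (yy G (Finset.mem_filter.1 hG).1) S₀ := by
        conv_lhs => rw [hyins G (Finset.mem_filter.1 hG).1]
        rw [hSdS₀ G hG]
      have e2 : G' = insert (yy G' (Finset.mem_filter.1 hG').1) S₀ := by
        conv_lhs => rw [hyins G' (Finset.mem_filter.1 hG').1]
        rw [hSdS₀ G' hG']
      rw [e1, e2, hGG']
  -- final arithmetic
  have hkey : n.choose (D+1) * (D+1) = (F.powersetCard D).card * (n - D) := by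
    rw [Finset.card_powersetCard, ← hn]
    exact Nat.choose_succ_right_eq n D
  have hchain : (F.powersetCard D).card * (n - D)
      ≤ (F.powersetCard D).card * (hit.card * ((D+1) * R.choose (D+1))) := by
    calc (F.powersetCard D).card * (n - D) = n.choose (D+1) * (D+1) := hkey.symm
      _ ≤ (good.card * R.choose (D+1)) * (D+1) := Nat.mul_le_mul_right _ stepC
      _ ≤ (((F.powersetCard D).card * fib.card) * R.choose (D+1)) * (D+1) :=
          Nat.mul_le_mul_right _ (Nat.mul_le_mul_right _ hgoodle)
      _ ≤ (((F.powersetCard D).card * hit.card) * R.choose (D+1)) * (D+1) :=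
          Nat.mul_le_mul_right _ (Nat.mul_le_mul_right _ (Nat.mul_le_mul_left _ hfibhit))
      _ = (F.powersetCard D).card * (hit.card * ((D+1) * R.choose (D+1))) := by ring
  have hpcpos : 0 < (F.powersetCard D).card := Finset.card_pos.2 htne
  have := Nat.le_of_mul_le_mul_left hchain hpcpos
  omega

def chunks (c : ℕ) : List α → List (List α)
  | [] => []
  | x :: xs => (x :: xs.take c) :: chunks c (xs.drop c)
  termination_by l => l.length
  decreasing_by
    simp only [List.length_drop, List.length_cons]
    omega

theorem chunks_flatten (c : ℕ) (l : List α) : (chunks c l).flatten = l := by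
  induction l using chunks.induct c with
  | case1 => simp [chunks]
  | case2 x xs ih =>
    rw [chunks]
    simp only [List.flatten_cons, ih]
    simp [List.take_append_drop]

theorem chunks_mem_length (c : ℕ) (l : List α) : ∀ ch ∈ chunks c l, ch.length ≤ c + 1 := by
  induction l using chunks.induct c with
  | case1 => simp [chunks]
  | case2 x xs ih =>
    rw [chunks]
    intro ch hch
    rcases List.mem_cons.1 hch with rfl | h
    · simp only [List.length_cons, List.length_take]
      omega
    · exact ih ch h

theorem chunks_mem_ne_nil (c : ℕ) (l : List α) : ∀ ch ∈ chunks c l, ch ≠ [] := by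
  induction l using chunks.induct c with
  | case1 => simp [chunks]
  | case2 x xs ih =>
    rw [chunks]
    intro ch hch
    rcases List.mem_cons.1 hch with rfl | h
    · simp
    · exact ih ch h

theorem chunks_count (c : ℕ) (l : List α) : (chunks c l).length * (c + 1) ≤ l.length + c := by
  induction l using chunks.induct c with
  | case1 => simp [chunks]
  | case2 x xs ih =>
    rw [chunks]
    simp only [List.length_cons]
    rw [Nat.succ_mul]
    have hd : (xs.drop c).length = xs.length - c := List.length_drop
    rw [hd] at ih
    have h5 : (chunks c (xs.drop c)).length * (c+1) = 0 ∨
        c + 1 ≤ (chunks c (xs.drop c)).length * (c+1) := by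
      rcases Nat.eq_zero_or_pos (chunks c (xs.drop c)).length with h | h
      · left; rw [h]; ring
      · right
        calc c + 1 = 1 * (c+1) := by ring
          _ ≤ (chunks c (xs.drop c)).length * (c+1) := Nat.mul_le_mul_right _ h
    rcases h5 with h5 | h5 <;> omega

theorem mem_unions {L : List (Finset α)} {x : α} :
    x ∈ L.foldr (· ∪ ·) ∅ ↔ ∃ t ∈ L, x ∈ t := by
  induction L with
  | nil => simp
  | cons a t ih => simp [List.foldr_cons, Finset.mem_union, ih]

theorem card_unions {L : List (Finset α)} {b : ℕ} (h : ∀ t ∈ L, t.card ≤ b) :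
    (L.foldr (· ∪ ·) ∅).card ≤ L.length * b := by
  induction L with
  | nil => simp
  | cons a t ih =>
    simp only [List.foldr_cons, List.length_cons]
    calc (a ∪ t.foldr (· ∪ ·) ∅).card ≤ a.card + (t.foldr (· ∪ ·) ∅).card :=
          Finset.card_union_le _ _
      _ ≤ b + t.length * b := by
          have h1 := h a (List.mem_cons_self)
          have h2 := ih (fun u hu => h u (List.mem_cons_of_mem a hu))
          omega
      _ = (t.length + 1) * b := by ring

theorem sum_map_mul_left' {β : Type} (c : ℕ) (f : β → ℕ) (L : List β) :
    (L.map (fun x => c * f x)).sum = c * (L.map f).sum := by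
  induction L with
  | nil => simp
  | cons a t ih => simp [List.map_cons, List.sum_cons, ih, Nat.mul_add]

theorem net (D : ℕ) : ∀ (K : ℕ), 1 ≤ K → ∃ s : ℕ,
    ∀ (ρ : α → Fin D → ℝ) (l : List α), ∃ S : Finset α,
      (∀ y ∈ S, y ∈ l) ∧ S.card ≤ s ∧
      ∀ v : Fin D → ℝ, l ≠ [] → l.length ≤ K * (l.countP fun a => decide (ρ a ≤ v)) →
        ∃ y ∈ S, ρ y ≤ v := by
  induction D with
  | zero =>
    intro K hK
    refine ⟨1, ?_⟩
    intro ρ l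
    match l with
    | [] => exact ⟨∅, by simp, by simp, fun v hne => absurd rfl hne⟩
    | a :: t =>
      refine ⟨{a}, ?_, by simp, ?_⟩
      · intro y hy
        rw [Finset.mem_singleton] at hy
        exact hy ▸ List.mem_cons_self
      · intro v _ _
        exact ⟨a, Finset.mem_singleton_self a, fun c => c.elim0⟩
  | succ D ih =>
    intro K hK
    obtain ⟨s', hIH⟩ := ih (8 * K ^ 2) (by nlinarith)
    refine ⟨2 * K + (4 * K) * s', ?_⟩
    intro ρ l
    by_cases hsmall : l.length ≤ 2 * K
    · refine ⟨l.toFinset, fun y hy => List.mem_toFinset.1 hy, le_trans (List.toFinset_card_le l) (by omega), ?_⟩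
      intro v hne hdens
      have hpos : 0 < l.countP fun a => decide (ρ a ≤ v) := by
        rcases Nat.eq_zero_or_pos (l.countP fun a => decide (ρ a ≤ v)) with h0 | h0
        · rw [h0, Nat.mul_zero] at hdens
          exact absurd (List.length_eq_zero_iff.1 (Nat.le_zero.1 hdens)) hne
        · exact h0
      obtain ⟨a, ha, hpa⟩ := List.countP_pos_iff.1 hpos
      exact ⟨a, List.mem_toFinset.2 ha, of_decide_eq_true hpa⟩
    · -- big case
      push_neg at hsmall
      set ρ' : α → Fin D → ℝ := fun a i => ρ a i.castSucc with hρ'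
      set le' : α → α → Bool := fun a b => decide (ρ a (Fin.last D) ≤ ρ b (Fin.last D)) with hle'
      set ls := l.mergeSort le' with hls
      have hperm : ls.Perm l := List.mergeSort_perm l le'
      have hsorted : ls.Pairwise (fun a b => ρ a (Fin.last D) ≤ ρ b (Fin.last D)) := by
        have h := List.pairwise_mergeSort (le := le')
          (fun a b c hab hbc => by
            simp only [hle', decide_eq_true_eq] at hab hbc ⊢
            exact le_trans hab hbc)
          (fun a b => by
            simp only [hle', Bool.or_eq_true, decide_eq_true_eq]
            exact le_total _ _)
          l
        refine h.imp ?_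
        intro a b hab
        simpa [hle'] using hab
      set cc := l.length / (4 * K) with hcc
      set CH := chunks cc ls with hCH
      choose SS hSS1 hSS2 hSS3 using hIH ρ'
      set S := (CH.map SS).foldr (· ∪ ·) ∅ with hS
      have hchlen : CH.length ≤ 4 * K := by
        have h1 : CH.length * (cc + 1) ≤ ls.length + cc := chunks_count cc ls
        have h2 : ls.length = l.length := hperm.length_eq
        have h3 : l.length < (cc + 1) * (4 * K) := by
          have h4 : 0 < 4 * K := by omega
          have h6 := Nat.div_add_mod l.length (4*K)
          have h7 : l.length % (4*K) < 4*K := Nat.mod_lt _ h4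
          have h8 : l.length < (l.length / (4*K) + 1) * (4 * K) := by nlinarith
          calc l.length < (l.length / (4*K) + 1) * (4 * K) := h8
            _ = (cc + 1) * (4 * K) := by rw [hcc]
        by_contra hcon
        push_neg at hcon
        have : (4 * K + 1) * (cc + 1) ≤ CH.length * (cc + 1) :=
          Nat.mul_le_mul_right _ hcon
        nlinarith
      refine ⟨S, ?_, ?_, ?_⟩
      · -- members of S are in l
        intro y hy
        rw [hS] at hy
        obtain ⟨t, ht, hyt⟩ := mem_unions.1 hy
        obtain ⟨ch, hch, rfl⟩ := List.mem_map.1 ht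
        have : y ∈ ch := hSS1 ch y hyt
        have : y ∈ ls := by
          rw [← chunks_flatten cc ls]
          exact List.mem_flatten.2 ⟨ch, hch, this⟩
        exact hperm.mem_iff.1 this
      · -- cardinality
        rw [hS]
        calc ((CH.map SS).foldr (· ∪ ·) ∅).card ≤ (CH.map SS).length * s' := by
              apply card_unions
              intro t ht
              obtain ⟨ch, hch, rfl⟩ := List.mem_map.1 ht
              exact hSS2 ch
          _ = CH.length * s' := by rw [List.length_map]
          _ ≤ 4 * K * s' := Nat.mul_le_mul_right _ hchlen
          _ ≤ 2 * K + 4 * K * s' := by omega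
      · -- hitting
        intro v hne hdens
        set inT : α → Bool := fun a => decide (ρ a ≤ v) with hinT
        set low : α → Bool := fun a => decide (ρ a (Fin.last D) ≤ v (Fin.last D)) with hlow
        have hcntls : ls.countP inT = l.countP inT := hperm.countP_eq inT
        set a0 := ls.countP inT with ha0
        -- key combinatorial claim
        have hkey : ∃ ch ∈ CH, (∀ a ∈ ch, low a = true) ∧
            ch.length ≤ (8 * K ^ 2) * (ch.countP inT) := by
          by_contra hcon
          push_neg at hcon
          -- every all-low chunk is sparse
          have hsparse : ∀ ch ∈ CH, (∀ a ∈ ch, low a = true) →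
              (8 * K ^ 2) * (ch.countP inT) < ch.length := by
            intro ch hch hall
            have := hcon ch hch hall
            omega
          -- chunk pairwise ordering
          have hpw : CH.Pairwise (fun ch₁ ch₂ => ∀ a ∈ ch₁, ∀ b ∈ ch₂,
              ρ a (Fin.last D) ≤ ρ b (Fin.last D)) := by
            have : (CH.flatten).Pairwise (fun a b => ρ a (Fin.last D) ≤ ρ b (Fin.last D)) := by
              rw [hCH, chunks_flatten]
              exact hsorted
            exact (List.pairwise_flatten.1 this).2
          -- bound: 8K² * a0 ≤ ls.length + 8K² * (cc+1)
          have hflat : ls = CH.flatten := by rw [hCH, chunks_flatten]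
          have hsum : a0 = (CH.map (List.countP inT)).sum := by
            rw [ha0, hflat, List.countP_flatten]
          have hlensum : ls.length = (CH.map List.length).sum := by
            rw [hflat, List.length_flatten]
          have hbound : 8 * K ^ 2 * a0 ≤ ls.length + 8 * K ^ 2 * (cc + 1) := by
            by_cases hex : ∃ ch ∈ CH, 0 < ch.countP inT ∧ ¬(∀ a ∈ ch, low a = true)
            · obtain ⟨chm, hchm, hcntm, hnotlow⟩ := hex
              push_neg at hnotlow
              obtain ⟨b, hb, hbl⟩ := hnotlow
              have hblf : low b = false := by
                cases h : low b
                · rfl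
                · exact absurd h hbl
              obtain ⟨z, hz, hzT⟩ := List.countP_pos_iff.1 hcntm
              obtain ⟨L1, L2, hsplit⟩ := List.append_of_mem hchm
              have hpw2 := hsplit ▸ hpw
              have hpwa := List.pairwise_append.1 hpw2
              have hL1rel : ∀ ch' ∈ L1, ∀ a ∈ ch', ∀ c ∈ chm, ρ a (Fin.last D) ≤ ρ c (Fin.last D) := by
                intro ch' h' a ha c hc
                exact hpwa.2.2 ch' h' chm (List.mem_cons_self) a ha c hc
              have hL2rel : ∀ ch' ∈ L2, ∀ a ∈ chm, ∀ c ∈ ch', ρ a (Fin.last D) ≤ ρ c (Fin.last D) := by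
                intro ch' h' a ha c hc
                exact (List.pairwise_cons.1 hpwa.2.1).1 ch' h' a ha c hc
              -- L2 chunks have zero count
              have hL2zero : ∀ ch' ∈ L2, ch'.countP inT = 0 := by
                intro ch' h'
                rw [List.countP_eq_zero]
                intro a' ha' hcontra
                have h1 : ρ a' (Fin.last D) ≤ v (Fin.last D) := by
                  have := of_decide_eq_true hcontra
                  exact this (Fin.last D)
                have h2 : ρ b (Fin.last D) ≤ ρ a' (Fin.last D) := hL2rel ch' h' b hb a' ha'
                have h3 : ¬ (ρ b (Fin.last D) ≤ v (Fin.last D)) := by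
                  intro hcc2
                  rw [hlow] at hblf
                  rw [decide_eq_false_iff_not] at hblf
                  exact hblf hcc2
                exact h3 (le_trans h2 h1)
              -- L1 chunks are all-low
              have hL1low : ∀ ch' ∈ L1, ∀ a ∈ ch', low a = true := by
                intro ch' h' a ha
                rw [hlow, decide_eq_true_eq]
                have h2 : ρ a (Fin.last D) ≤ ρ z (Fin.last D) := hL1rel ch' h' a ha z hz
                have h1 : ρ z (Fin.last D) ≤ v (Fin.last D) := (of_decide_eq_true hzT) (Fin.last D)
                exact le_trans h2 h1
              -- sparse bound on L1
              have hL1sparse : ∀ ch' ∈ L1, 8 * K ^ 2 * ch'.countP inT ≤ ch'.length := by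
                intro ch' h'
                have hmem : ch' ∈ CH := by rw [hsplit]; exact List.mem_append_left _ h'
                exact le_of_lt (hsparse ch' hmem (hL1low ch' h'))
              have hsum1 : (L1.map (fun ch' => 8 * K ^ 2 * ch'.countP inT)).sum ≤ (L1.map List.length).sum :=
                List.sum_le_sum hL1sparse
              have hsum2 : (L1.map (fun ch' => 8 * K ^ 2 * ch'.countP inT)).sum
                  = 8 * K ^ 2 * (L1.map (List.countP inT)).sum := sum_map_mul_left' _ _ _
              have hcntm_le : chm.countP inT ≤ cc + 1 :=
                le_trans (List.countP_le_length) (chunks_mem_length cc ls chm hchm)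
              have hL2sum : (L2.map (List.countP inT)).sum = 0 := by
                rw [List.sum_eq_zero]
                intro x hx
                obtain ⟨ch', h', rfl⟩ := List.mem_map.1 hx
                exact hL2zero ch' h'
              have ha0split : a0 = (L1.map (List.countP inT)).sum + chm.countP inT := by
                rw [hsum, hsplit]
                simp only [List.map_append, List.map_cons, List.sum_append, List.sum_cons, hL2sum]
                omega
              have hlen1 : (L1.map List.length).sum ≤ ls.length := by
                rw [hlensum, hsplit]
                simp only [List.map_append, List.map_cons, List.sum_append, List.sum_cons]
                omega
              calc 8 * K ^ 2 * a0
                  = 8 * K ^ 2 * (L1.map (List.countP inT)).sum + 8 * K ^ 2 * chm.countP inT := by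
                    rw [ha0split, Nat.mul_add]
                _ ≤ (L1.map List.length).sum + 8 * K ^ 2 * (cc + 1) := by
                    rw [← hsum2]
                    exact Nat.add_le_add hsum1 (Nat.mul_le_mul_left _ hcntm_le)
                _ ≤ ls.length + 8 * K ^ 2 * (cc + 1) := Nat.add_le_add_right hlen1 _
            · push_neg at hex
              have hpt : ∀ ch ∈ CH, 8 * K ^ 2 * ch.countP inT ≤ ch.length := by
                intro ch hch
                rcases Nat.eq_zero_or_pos (ch.countP inT) with h0 | h0
                · rw [h0]; omega
                · exact le_of_lt (hsparse ch hch (hex ch hch h0))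
              have hsum1 : (CH.map (fun ch => 8 * K ^ 2 * ch.countP inT)).sum ≤ (CH.map List.length).sum :=
                List.sum_le_sum hpt
              have hsum2 : (CH.map (fun ch => 8 * K ^ 2 * ch.countP inT)).sum
                  = 8 * K ^ 2 * (CH.map (List.countP inT)).sum := sum_map_mul_left' _ _ _
              rw [hsum, ← hlensum] at *
              omega
          -- final arithmetic contradiction
          have hdiv : cc * (4 * K) ≤ l.length := by
            rw [hcc]; exact Nat.div_mul_le_self l.length (4 * K)
          have hlen : ls.length = l.length := hperm.length_eq
          rw [hlen, hcntls] at hbound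
          have hKa : l.length ≤ K * (l.countP inT) := hdens
          have e2 : l.length * (8*K^2) ≤ (K * (l.countP inT)) * (8*K^2) :=
            Nat.mul_le_mul_right _ hKa
          have e1 : (8 * K ^ 2 * (l.countP inT)) * K ≤ (l.length + 8 * K ^ 2 * (cc + 1)) * K :=
            Nat.mul_le_mul_right _ hbound
          have e3 : 2*K^2 * (cc * (4*K)) ≤ 2*K^2 * l.length := Nat.mul_le_mul_left _ hdiv
          have e4 : l.length * (8*K^2) ≤ l.length * K + 2*K^2 * l.length + 8*K^3 := by nlinarith
          have e5 : K^2 * (5 * l.length) ≤ K^2 * (8*K) := by nlinarith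
          have hKK : 0 < K^2 := by positivity
          have e6 : 5 * l.length ≤ 8 * K := Nat.le_of_mul_le_mul_left e5 hKK
          omega
        obtain ⟨ch, hch, hall, hdense⟩ := hkey
        -- apply the (D)-net of this chunk
        have hchne : ch ≠ [] := chunks_mem_ne_nil cc ls ch hch
        have hdense' : ch.length ≤ (8 * K ^ 2) * (ch.countP fun a => decide (ρ' a ≤ fun i => v i.castSucc)) := by
          refine le_trans hdense (Nat.mul_le_mul_left _ ?_)
          apply List.countP_mono_left
          intro x _ hx
          simp only [hinT, decide_eq_true_eq] at hx
          simp only [decide_eq_true_eq]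
          intro i
          exact hx i.castSucc
        obtain ⟨y, hyS, hyle⟩ := hSS3 ch (fun i => v i.castSucc) hchne hdense'
        refine ⟨y, ?_, ?_⟩
        · rw [hS]
          apply mem_unions.2
          exact ⟨SS ch, List.mem_map.2 ⟨ch, hch, rfl⟩, hyS⟩
        · intro c
          refine Fin.lastCases ?_ ?_ c
          · have := hall y (hSS1 ch y hyS)
            simpa [hlow] using this
          · intro i
            exact hyle i

/-- expansion of `NoPDisj` to the weighted (sigma) family -/
theorem noPDisj_sigma {D p : ℕ} {X : Finset α} {ρ : α → Fin D → ℝ} {v : ι → Fin D → ℝ}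
    {F : Finset ι} (hne : ∀ i ∈ F, ∃ x ∈ X, ρ x ≤ v i) (hnop : NoPDisj p X ρ v F)
    (w : ι → ℕ) :
    NoPDisj p X ρ (fun s : (_ : ι) × ℕ => v s.1) (F.sigma (fun i => Finset.range (w i))) := by
  intro A hA hAcard
  by_cases hinj : ∀ s ∈ A, ∀ s' ∈ A, s.1 = s'.1 → s = s'
  · -- fst is injective on A
    have himg : A.image Sigma.fst ⊆ F := by
      intro i hi
      obtain ⟨s, hs, rfl⟩ := Finset.mem_image.1 hi
      exact (Finset.mem_sigma.1 (hA hs)).1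
    have hcard : (A.image Sigma.fst).card = p := by
      rw [Finset.card_image_of_injOn, hAcard]
      intro s hs s' hs' h
      exact hinj s hs s' hs' h
    obtain ⟨i, hi, j, hj, hij, hm⟩ := hnop _ himg hcard
    obtain ⟨s, hs, hsi⟩ := Finset.mem_image.1 hi
    obtain ⟨s', hs', hsj⟩ := Finset.mem_image.1 hj
    refine ⟨s, hs, s', hs', ?_, ?_⟩
    · intro h
      exact hij (by rw [← hsi, ← hsj, h])
    · obtain ⟨x, hx, h1, h2⟩ := hm
      refine ⟨x, hx, ?_, ?_⟩
      · show ρ x ≤ v s.1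
        rw [hsi]; exact h1
      · show ρ x ≤ v s'.1
        rw [hsj]; exact h2
  · -- two distinct elements with the same base
    push_neg at hinj
    obtain ⟨s, hs, s', hs', hfst, hne'⟩ := hinj
    have hiF : s.1 ∈ F := (Finset.mem_sigma.1 (hA hs)).1
    obtain ⟨x, hx, hle⟩ := hne s.1 hiF
    refine ⟨s, hs, s', hs', hne', x, hx, hle, ?_⟩
    show ρ x ≤ v s'.1
    rw [← hfst]; exact hle

theorem core (p D : ℕ) (hp : 2 ≤ p) (hD : 1 ≤ D) :
    ∃ N : ℕ, ∀ (X : Finset α) (ρ : α → Fin D → ℝ) (F : Finset ι) (v : ι → Fin D → ℝ),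
      (∀ i ∈ F, ∃ x ∈ X, ρ x ≤ v i) → NoPDisj p X ρ v F →
        ∃ S ⊆ X, S.card ≤ N ∧ ∀ i ∈ F, ∃ x ∈ S, ρ x ≤ v i := by
  classical
  obtain ⟨R, K1, hR1, hK11, hDR, hheavy⟩ := heavy_point (α := α) (ι := (_ : ι) × ℕ) p D hp hD
  set M := 4 * K1 - 1 with hMdef
  have hM : M + 1 = 4 * K1 := by omega
  have hM3 : 3 ≤ M := by omega
  obtain ⟨snet, hnet⟩ := net (α := α) D (8 * K1) (by omega)
  set n₀ := max R (2 * D) with hn₀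
  refine ⟨n₀ + snet, ?_⟩
  intro X ρ F v hne hnop
  by_cases hsm : F.card ≤ n₀
  · -- small family: pierce individually
    refine ⟨F.attach.image (fun i => (hne i.1 i.2).choose), ?_, ?_, ?_⟩
    · intro x hx
      obtain ⟨i, -, rfl⟩ := Finset.mem_image.1 hx
      exact (hne i.1 i.2).choose_spec.1
    · calc (F.attach.image (fun i => (hne i.1 i.2).choose)).card ≤ F.attach.card :=
          Finset.card_image_le
        _ = F.card := Finset.card_attach
        _ ≤ n₀ + snet := by omega
    · intro i hi
      refine ⟨(hne i hi).choose, ?_, (hne i hi).choose_spec.2⟩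
      exact Finset.mem_image.2 ⟨⟨i, hi⟩, Finset.mem_attach _ _, rfl⟩
  · push_neg at hsm
    set n := F.card with hn
    -- MWU loop invariants
    have main : ∀ t : ℕ, ∃ (w : ι → ℕ) (xs : List α), xs.length = t ∧ (∀ x ∈ xs, x ∈ X) ∧
        (∀ i ∈ F, w i * 2 ^ (xs.countP (fun x => decide (ρ x ≤ v i))) = 2 ^ t) ∧
        n ≤ (∑ i ∈ F, w i) ∧ (∑ i ∈ F, w i) * (2 * K1) ^ t ≤ n * M ^ t := by
      intro t
      induction t with
      | zero =>
        exact ⟨fun _ => 1, [], rfl, by simp, by simp, by simp [hn], by simp [hn]⟩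
      | succ t ih =>
        obtain ⟨w, xs, hlen, hmem, hid, hlow, hgrow⟩ := ih
        set F' := F.sigma (fun i => Finset.range (w i)) with hF'
        set Nt := ∑ i ∈ F, w i with hNt
        have hF'card : F'.card = Nt := by
          rw [hF', Finset.card_sigma]
          simp [hNt]
        have hF'ne : ∀ s ∈ F', ∃ x ∈ X, ρ x ≤ v s.1 := by
          intro s hs
          exact hne s.1 (Finset.mem_sigma.1 hs).1
        have hF'nop := noPDisj_sigma hne hnop w
        have hRNt : R ≤ F'.card := by
          rw [hF'card]
          calc R ≤ n₀ := le_max_left _ _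
            _ ≤ n := le_of_lt hsm
            _ ≤ Nt := hlow
        obtain ⟨x, hxX, hxhit⟩ := hheavy X ρ F' (fun s => v s.1) hF'ne hF'nop hRNt
        -- compute the hit weight
        set H := ∑ i ∈ F.filter (fun i => ρ x ≤ v i), w i with hH
        have hfilter : (F'.filter (fun s => ρ x ≤ v s.1)).card = H := by
          have : F'.filter (fun s => ρ x ≤ v s.1)
              = (F.filter (fun i => ρ x ≤ v i)).sigma (fun i => Finset.range (w i)) := by
            ext s
            simp only [Finset.mem_filter, Finset.mem_sigma, hF']
            tauto
          rw [this, Finset.card_sigma]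
          simp [hH]
        rw [hF'card, hfilter] at hxhit
        -- new weights
        set w' : ι → ℕ := fun i => if ρ x ≤ v i then w i else 2 * w i with hw'
        refine ⟨w', x :: xs, by simp [hlen], ?_, ?_, ?_, ?_⟩
        · intro y hy
          rcases List.mem_cons.1 hy with rfl | hy'
          · exact hxX
          · exact hmem y hy'
        · -- identity invariant
          intro i hi
          by_cases hhit : ρ x ≤ v i
          · have : (x :: xs).countP (fun y => decide (ρ y ≤ v i))
                = xs.countP (fun y => decide (ρ y ≤ v i)) + 1 := by
              rw [List.countP_cons_of_pos]
              simp [hhit]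
            rw [this, hw']
            simp only [if_pos hhit]
            rw [pow_succ, ← Nat.mul_assoc, hid i hi, pow_succ]
          · have : (x :: xs).countP (fun y => decide (ρ y ≤ v i))
                = xs.countP (fun y => decide (ρ y ≤ v i)) := by
              rw [List.countP_cons_of_neg]
              simp [hhit]
            rw [this, hw']
            simp only [if_neg hhit]
            calc 2 * w i * 2 ^ (xs.countP (fun y => decide (ρ y ≤ v i)))
                = 2 * (w i * 2 ^ (xs.countP (fun y => decide (ρ y ≤ v i)))) := by ring
              _ = 2 * 2 ^ t := by rw [hid i hi]
              _ = 2 ^ (t + 1) := by rw [pow_succ]; ring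
        · -- n ≤ sum w'
          refine le_trans hlow (Finset.sum_le_sum ?_)
          intro i hi
          rw [hw']
          by_cases hhit : ρ x ≤ v i <;> simp [hhit] <;> omega
        · -- growth invariant
          have hsplit : ∑ i ∈ F, w' i + H = 2 * Nt := by
            have h1 := Finset.sum_filter_add_sum_filter_not F (fun i => ρ x ≤ v i) w'
            have h2 := Finset.sum_filter_add_sum_filter_not F (fun i => ρ x ≤ v i) w
            have h3 : ∑ i ∈ F.filter (fun i => ρ x ≤ v i), w' i
                = ∑ i ∈ F.filter (fun i => ρ x ≤ v i), w i := by
              apply Finset.sum_congr rfl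
              intro i hi
              rw [hw']
              simp only [if_pos (Finset.mem_filter.1 hi).2]
            have h4 : ∑ i ∈ F.filter (fun i => ¬ ρ x ≤ v i), w' i
                = 2 * ∑ i ∈ F.filter (fun i => ¬ ρ x ≤ v i), w i := by
              rw [Finset.mul_sum]
              apply Finset.sum_congr rfl
              intro i hi
              rw [hw']
              simp only [if_neg (Finset.mem_filter.1 hi).2]
            rw [hH, hNt]
            omega
          have hNt2D : 2 * D ≤ Nt := le_trans (le_trans (le_max_right _ _) (le_of_lt hsm)) hlow
          have hNtH : Nt ≤ 2 * (H * K1) := by omega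
          -- one-step decay
          have key : (∑ i ∈ F, w' i) * (2 * K1) ≤ M * Nt := by
            have e4 : (∑ i ∈ F, w' i) * (2*K1) + H * (2*K1) = ((∑ i ∈ F, w' i) + H) * (2*K1) := by
              ring
            have e1 : ((∑ i ∈ F, w' i) + H) * (2*K1) = (2*Nt)*(2*K1) := by rw [hsplit]
            have e2 : M * Nt + Nt = (2*Nt)*(2*K1) := by
              calc M * Nt + Nt = (M+1) * Nt := by ring
                _ = (4*K1) * Nt := by rw [hM]
                _ = (2*Nt)*(2*K1) := by ring
            have e5 : H * (2*K1) = 2 * (H * K1) := by ring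
            omega
          calc (∑ i ∈ F, w' i) * (2 * K1) ^ (t+1)
              = ((∑ i ∈ F, w' i) * (2 * K1)) * (2 * K1) ^ t := by rw [pow_succ]; ring
            _ ≤ (M * Nt) * (2 * K1) ^ t := Nat.mul_le_mul_right _ key
            _ = M * (Nt * (2 * K1) ^ t) := by ring
            _ ≤ M * (n * M ^ t) := Nat.mul_le_mul_left _ hgrow
            _ = n * M ^ (t+1) := by rw [pow_succ]; ring
    -- run the MWU loop for T steps
    set L' := Nat.log2 n + 1 with hL'
    set T := M * (2 * L') with hT
    obtain ⟨w, xs, hlen, hmem, hid, hlow, hgrow⟩ := main T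
    -- power growth lemma
    have hMM : 2 * M ^ M ≤ (M + 1) ^ M := by
      have hM0 : (0:ℝ) < (M:ℝ) := by
        have : (3:ℝ) ≤ (M:ℝ) := by exact_mod_cast hM3
        linarith
      have h1 : (1 : ℝ) + (M:ℝ) * (1/(M:ℝ)) ≤ (1 + 1/(M:ℝ)) ^ M := by
        apply one_add_mul_le_pow
        have : (0:ℝ) ≤ 1/(M:ℝ) := by positivity
        linarith
      have h2 : (1:ℝ) + (M:ℝ) * (1/(M:ℝ)) = 2 := by
        field_simp
        norm_num
      have h3 : ((M:ℝ)+1) ^ M = (1+1/(M:ℝ)) ^ M * (M:ℝ) ^ M := by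
        rw [← mul_pow]
        congr 1
        field_simp
      have h4 : (2:ℝ) * (M:ℝ) ^ M ≤ ((M:ℝ)+1) ^ M := by
        rw [h3]
        apply mul_le_mul_of_nonneg_right _ (by positivity)
        rw [← h2]; exact h1
      exact_mod_cast h4
    have hpowT : 2 ^ (2*L') * M ^ T ≤ (M + 1) ^ T := by
      calc 2 ^ (2*L') * M ^ (M * (2*L')) = (2 * M ^ M) ^ (2*L') := by
            rw [mul_pow, ← pow_mul, Nat.mul_comm M (2*L')]
        _ ≤ ((M+1) ^ M) ^ (2*L') := Nat.pow_le_pow_left hMM _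
        _ = (M+1) ^ (M * (2*L')) := by rw [← pow_mul, Nat.mul_comm M (2*L')]
    have hn1 : 1 ≤ n := by omega
    have hnlt : n < 2 ^ L' := Nat.lt_log2_self
    -- per-member density
    have hdens : ∀ i ∈ F, xs.length ≤ (8 * K1) * (xs.countP fun a => decide (ρ a ≤ v i)) := by
      intro i hi
      set h := xs.countP (fun a => decide (ρ a ≤ v i)) with hh
      have hidi : w i * 2 ^ h = 2 ^ T := hid i hi
      have hwile : w i ≤ ∑ j ∈ F, w j :=
        Finset.single_le_sum (fun j _ => Nat.zero_le _) hi
      have e1 : (2:ℕ) ^ T * (2 * K1) ^ T = (M + 1) ^ T := by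
        have h9 : 2 * (2 * K1) = M + 1 := by omega
        rw [← Nat.mul_pow, h9]
      have e2 : (M+1) ^ T ≤ 2 ^ h * (n * M ^ T) := by
        calc (M+1) ^ T = 2 ^ T * (2 * K1) ^ T := e1.symm
          _ = (w i * 2 ^ h) * (2 * K1) ^ T := by rw [hidi]
          _ ≤ ((∑ j ∈ F, w j) * 2 ^ h) * (2 * K1) ^ T := by
              apply Nat.mul_le_mul_right
              exact Nat.mul_le_mul_right _ hwile
          _ = 2 ^ h * ((∑ j ∈ F, w j) * (2 * K1) ^ T) := by ring
          _ ≤ 2 ^ h * (n * M ^ T) := Nat.mul_le_mul_left _ hgrow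
      have e3 : 2 ^ (2*L') * M ^ T ≤ (2 ^ h * n) * M ^ T := by
        calc 2 ^ (2*L') * M ^ T ≤ (M+1) ^ T := hpowT
          _ ≤ 2 ^ h * (n * M ^ T) := e2
          _ = (2 ^ h * n) * M ^ T := by ring
      have hMTpos : 0 < M ^ T := Nat.pow_pos (by omega)
      have e4 : 2 ^ (2*L') ≤ 2 ^ h * n := Nat.le_of_mul_le_mul_right e3 hMTpos
      have h2h : 0 < 2 ^ h := Nat.pow_pos (by omega)
      have e5a : 2 ^ h * n < 2 ^ h * 2 ^ L' := mul_lt_mul_of_pos_left hnlt h2h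
      have e5 : 2 ^ (2*L') < 2 ^ (h + L') := by
        calc 2 ^ (2*L') ≤ 2 ^ h * n := e4
          _ < 2 ^ h * 2 ^ L' := e5a
          _ = 2 ^ (h + L') := (pow_add 2 h L').symm
      have e6 : 2 * L' < h + L' := by
        have := (Nat.pow_lt_pow_iff_right (by omega : 1 < 2)).1 e5
        exact this
      have hL'h : L' < h := by omega
      calc xs.length = M * (2 * L') := by rw [hlen]
        _ ≤ (4 * K1) * (2 * L') := Nat.mul_le_mul_right _ (by omega)
        _ = (8 * K1) * L' := by ring
        _ ≤ (8 * K1) * h := Nat.mul_le_mul_left _ (le_of_lt hL'h)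
    -- apply the net
    obtain ⟨S, hS1, hS2, hS3⟩ := hnet ρ xs
    have hxsne : xs ≠ [] := by
      intro hcon
      rw [hcon] at hlen
      simp only [List.length_nil] at hlen
      have : 0 < M * (2 * L') := by positivity
      omega
    refine ⟨S, ?_, ?_, ?_⟩
    · intro y hy
      exact hmem y (hS1 y hy)
    · omega
    · intro i hi
      obtain ⟨y, hyS, hyle⟩ := hS3 (v i) hxsne (hdens i hi)
      exact ⟨y, hyS, hyle⟩

end PQB

/-- An axis-parallel box in `ℝ^d`: a product of `d` closed intervals. -/
def IsBox {d : ℕ} (B : Set (Fin d → ℝ)) : Prop :=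
  ∃ a b : Fin d → ℝ, B = {x | ∀ i, x i ∈ Set.Icc (a i) (b i)}

/-- `(p,q)`-type Halman theorem for `p ≥ q ≥ 2`: there is `N = N(p,q,d)` such that for
every finite `P ⊂ ℝ^d` and every finite family `B` of boxes whose trace on `P` has the
`(p,q)` property and contains no empty set, the trace can be pierced by at most `N`
points of `P`. -/
theorem stmt_18 (p q d : ℕ) (hq : 2 ≤ q) (hpq : q ≤ p) (hd : 1 ≤ d) :
    ∃ N : ℕ, ∀ (P : Finset (Fin d → ℝ)) (B : Finset (Set (Fin d → ℝ))),
      (∀ b ∈ B, IsBox b) →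
      (∀ b ∈ B, ∃ x ∈ P, x ∈ b) →
      (∀ G ⊆ B, G.card = p → ∃ H ⊆ G, H.card = q ∧ ∃ x ∈ P, ∀ b ∈ H, x ∈ b) →
      ∃ S ⊆ P, S.card ≤ N ∧ ∀ b ∈ B, ∃ x ∈ S, x ∈ b := by
  classical
  have hp : 2 ≤ p := le_trans hq hpq
  have hD : 1 ≤ 2 * d := by omega
  -- the encoding of points
  set ρ : (Fin d → ℝ) → Fin (2*d) → ℝ := fun x c =>
    if h : (c : ℕ) < d then x ⟨c, h⟩ else - x ⟨(c:ℕ) - d, by omega⟩ with hρ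
  -- the encoding of boxes (caps)
  set vb : Set (Fin d → ℝ) → Fin (2*d) → ℝ := fun b c =>
    if hb : IsBox b then
      (if h : (c : ℕ) < d then hb.choose_spec.choose ⟨c, h⟩ else - hb.choose ⟨(c:ℕ) - d, by omega⟩)
    else 0 with hvb
  -- membership is dominance
  have hkey : ∀ b : Set (Fin d → ℝ), IsBox b → ∀ x : Fin d → ℝ, (x ∈ b ↔ ρ x ≤ vb b) := by
    intro b hb x
    have heq : b = {y : Fin d → ℝ | ∀ i, y i ∈ Set.Icc (hb.choose i) (hb.choose_spec.choose i)} :=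
      hb.choose_spec.choose_spec
    constructor
    · intro hx c
      have hx' : ∀ i, hb.choose i ≤ x i ∧ x i ≤ hb.choose_spec.choose i := by
        intro i
        have := (heq ▸ hx) i
        exact ⟨this.1, this.2⟩
      rw [hρ, hvb]
      simp only [dif_pos hb]
      by_cases h : (c : ℕ) < d
      · simp only [dif_pos h]
        exact (hx' ⟨c, h⟩).2
      · simp only [dif_neg h]
        exact neg_le_neg (hx' ⟨(c:ℕ) - d, by omega⟩).1
    · intro hle
      rw [heq]
      intro i
      have h1 : ρ x ⟨(i : ℕ), by omega⟩ ≤ vb b ⟨(i : ℕ), by omega⟩ := hle _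
      have h2 : ρ x ⟨(i : ℕ) + d, by omega⟩ ≤ vb b ⟨(i : ℕ) + d, by omega⟩ := hle _
      rw [hρ, hvb] at h1 h2
      simp only [dif_pos hb] at h1 h2
      have hid : (i : ℕ) < d := i.isLt
      simp only [dif_pos hid] at h1
      have hnd : ¬ ((i : ℕ) + d < d) := by omega
      simp only [dif_neg hnd] at h2
      have hfin1 : (⟨(i:ℕ), hid⟩ : Fin d) = i := by
        apply Fin.ext; rfl
      have hfin2 : (⟨(i:ℕ) + d - d, by omega⟩ : Fin d) = i := by
        apply Fin.ext; simp
      rw [hfin1] at h1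
      rw [hfin2] at h2
      constructor
      · exact le_of_neg_le_neg h2
      · exact h1
  obtain ⟨N, hcore⟩ := PQB.core (α := Fin d → ℝ) (ι := Set (Fin d → ℝ)) p (2*d) hp hD
  refine ⟨N, ?_⟩
  intro P B hbox hne hpq3
  have hne' : ∀ b ∈ B, ∃ x ∈ P, ρ x ≤ vb b := by
    intro b hb
    obtain ⟨x, hx, hxb⟩ := hne b hb
    exact ⟨x, hx, (hkey b (hbox b hb) x).1 hxb⟩
  have hnop : PQB.NoPDisj p P ρ vb B := by
    intro A hA hAcard
    obtain ⟨H, hHsub, hHcard, x, hxP, hxall⟩ := hpq3 A hA hAcard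
    have h2 : 1 < H.card := by omega
    obtain ⟨i, hi, j, hj, hij⟩ := Finset.one_lt_card.1 h2
    refine ⟨i, hHsub hi, j, hHsub hj, hij, x, hxP, ?_, ?_⟩
    · exact (hkey i (hbox i (hA (hHsub hi))) x).1 (hxall i hi)
    · exact (hkey j (hbox j (hA (hHsub hj))) x).1 (hxall j hj)
  obtain ⟨S, hSsub, hScard, hScover⟩ := hcore P ρ B vb hne' hnop
  refine ⟨S, hSsub, hScard, ?_⟩
  intro b hb
  obtain ⟨x, hxS, hxle⟩ := hScover b hb
  exact ⟨x, hxS, (hkey b (hbox b hb) x).2 hxle⟩
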